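/- Let (σ_n)_{n≥0} be positive real weights satisfying σ_n ≤ c·σ_j whenever n/2 ≤ j ≤ n, for some finite constant c > 0. For complex sequences define ‖a‖ = sup_{m≥0} |a_m| σ_m + Σ_{n=0}^∞ |a_n|, and let ℓ∞_σ be the set of sequences a with ‖a‖ < ∞. Then for all a, b ∈ ℓ∞_σ, the convolution a*b defined by (a*b)_n = Σ_{j=0}^n a_{n−j} b_j belongs to ℓ∞_σ and satisfies ‖a*b‖ ≤ (2c+1)·‖a‖·‖b‖. -/

import Mathlib

open Real

/-- The weighted norm `‖a‖ = sup_{m≥0} |a_m| σ_m + Σ_{n=0}^∞ |a_n|`. -/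
noncomputable def seqNorm (σ : ℕ → ℝ) (a : ℕ → ℂ) : ℝ :=
  (⨆ m : ℕ, ‖a m‖ * σ m) + ∑' n : ℕ, ‖a n‖

/-- Membership in the weighted space `ℓ∞_σ`: the norm `‖a‖` is finite. -/
def MemLinfSigma (σ : ℕ → ℝ) (a : ℕ → ℂ) : Prop :=
  Summable (fun n : ℕ => ‖a n‖) ∧
  BddAbove (Set.range fun m : ℕ => ‖a m‖ * σ m)

/-- Convolution of sequences, `(a*b)_n = Σ_{j=0}^n a_{n−j} b_j`. -/
noncomputable def convSeq (a b : ℕ → ℂ) (n : ℕ) : ℂ :=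
  ∑ j ∈ Finset.range (n + 1), a (n - j) * b j

theorem stmt_13 (σ : ℕ → ℝ) (c : ℝ) (hσ : ∀ n, 0 < σ n) (hc : 0 < c)
    (hreg : ∀ n j : ℕ, n ≤ 2 * j → j ≤ n → σ n ≤ c * σ j)
    (a b : ℕ → ℂ) (ha : MemLinfSigma σ a) (hb : MemLinfSigma σ b) :
    MemLinfSigma σ (convSeq a b) ∧
    seqNorm σ (convSeq a b) ≤ (2 * c + 1) * (seqNorm σ a * seqNorm σ b) := by
  obtain ⟨haS, haB⟩ := ha
  obtain ⟨hbS, hbB⟩ := hb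
  set A1 : ℝ := ∑' n, ‖a n‖ with hA1
  set B1 : ℝ := ∑' n, ‖b n‖ with hB1
  set AI : ℝ := ⨆ m, ‖a m‖ * σ m with hAI
  set BI : ℝ := ⨆ m, ‖b m‖ * σ m with hBI
  have hA1nn : 0 ≤ A1 := tsum_nonneg fun n => norm_nonneg _
  have hB1nn : 0 ≤ B1 := tsum_nonneg fun n => norm_nonneg _
  have hAIub : ∀ m, ‖a m‖ * σ m ≤ AI := fun m => le_ciSup haB m
  have hBIub : ∀ m, ‖b m‖ * σ m ≤ BI := fun m => le_ciSup hbB m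
  have hAInn : 0 ≤ AI :=
    le_trans (mul_nonneg (norm_nonneg _) (hσ 0).le) (hAIub 0)
  have hBInn : 0 ≤ BI :=
    le_trans (mul_nonneg (norm_nonneg _) (hσ 0).le) (hBIub 0)
  -- the dominating sequence
  set D : ℕ → ℝ := fun n => ∑ j ∈ Finset.range (n + 1),
      ‖a (n - j)‖ * ‖b j‖ with hD
  have hDeq : ∀ n, D n = ∑ k ∈ Finset.range (n + 1),
      ‖a k‖ * ‖b (n - k)‖ := by
    intro n
    rw [hD]
    rw [← Finset.sum_range_reflect (fun k => ‖a k‖ * ‖b (n - k)‖) (n+1)]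
    refine Finset.sum_congr rfl fun j hj => ?_
    have hjn : j ≤ n := Nat.lt_succ_iff.mp (Finset.mem_range.mp hj)
    have e1 : n + 1 - 1 - j = n - j := by omega
    rw [e1, Nat.sub_sub_self hjn]
  have hfs : Summable fun n => ‖(‖a n‖ : ℝ)‖ := by
    simpa [Real.norm_eq_abs, abs_of_nonneg (norm_nonneg _)] using haS
  have hgs : Summable fun n => ‖(‖b n‖ : ℝ)‖ := by
    simpa [Real.norm_eq_abs, abs_of_nonneg (norm_nonneg _)] using hbS
  have hDS : Summable D := by
    have := (summable_norm_sum_mul_range_of_summable_norm hfs hgs).of_norm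
    refine this.congr fun n => ?_
    rw [hDeq n]
  have hDtsum : ∑' n, D n = A1 * B1 := by
    rw [hA1, hB1, tsum_mul_tsum_eq_tsum_sum_range_of_summable_norm hfs hgs]
    exact tsum_congr fun n => hDeq n
  have hconv_le : ∀ n, ‖convSeq a b n‖ ≤ D n := by
    intro n
    refine (norm_sum_le _ _).trans_eq ?_
    exact Finset.sum_congr rfl fun j _ => norm_mul _ _
  have hconvnn : ∀ n, 0 ≤ ‖convSeq a b n‖ := fun n => norm_nonneg _
  have hconvS : Summable fun n => ‖convSeq a b n‖ :=
    Summable.of_nonneg_of_le hconvnn hconv_le hDS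
  have hconvT : ∑' n, ‖convSeq a b n‖ ≤ A1 * B1 := by
    rw [← hDtsum]
    exact Summable.tsum_le_tsum hconv_le hconvS hDS
  -- pointwise weighted bound
  set K : ℝ := c * AI * B1 + c * BI * A1 with hK
  have hsup : ∀ n, ‖convSeq a b n‖ * σ n ≤ K := by
    intro n
    have h1 : ‖convSeq a b n‖ * σ n ≤
        ∑ j ∈ Finset.range (n + 1),
          ‖a (n - j)‖ * ‖b j‖ * σ n := by
      rw [← Finset.sum_mul]
      exact mul_le_mul_of_nonneg_right (hconv_le n) (hσ n).le
    refine h1.trans ?_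
    rw [← Finset.sum_filter_add_sum_filter_not (Finset.range (n+1)) (fun j => 2 * j ≤ n)]
    have hS1 : ∑ j ∈ (Finset.range (n+1)).filter (fun j => 2 * j ≤ n),
        ‖a (n - j)‖ * ‖b j‖ * σ n ≤ c * AI * B1 := by
      have step : ∀ j ∈ (Finset.range (n+1)).filter (fun j => 2 * j ≤ n),
          ‖a (n - j)‖ * ‖b j‖ * σ n
            ≤ c * AI * ‖b j‖ := by
        intro j hj
        simp only [Finset.mem_filter, Finset.mem_range] at hj
        have hσn : σ n ≤ c * σ (n - j) := hreg n (n - j) (by omega) (by omega)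
        have hA := hAIub (n - j)
        have h0a := norm_nonneg (a (n - j))
        have h0b := norm_nonneg (b j)
        calc ‖a (n - j)‖ * ‖b j‖ * σ n
            ≤ ‖a (n - j)‖ * ‖b j‖ * (c * σ (n - j)) :=
              mul_le_mul_of_nonneg_left hσn (mul_nonneg h0a h0b)
          _ = c * (‖a (n - j)‖ * σ (n - j)) * ‖b j‖ := by ring
          _ ≤ c * AI * ‖b j‖ :=
              mul_le_mul_of_nonneg_right (mul_le_mul_of_nonneg_left hA hc.le) h0b
      refine (Finset.sum_le_sum step).trans ?_
      rw [← Finset.mul_sum]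
      refine mul_le_mul_of_nonneg_left ?_ (by positivity)
      exact Summable.sum_le_tsum _ (fun i _ => norm_nonneg _) hbS
    have hS2 : ∑ j ∈ (Finset.range (n+1)).filter (fun j => ¬ 2 * j ≤ n),
        ‖a (n - j)‖ * ‖b j‖ * σ n ≤ c * BI * A1 := by
      have step : ∀ j ∈ (Finset.range (n+1)).filter (fun j => ¬ 2 * j ≤ n),
          ‖a (n - j)‖ * ‖b j‖ * σ n
            ≤ c * BI * ‖a (n - j)‖ := by
        intro j hj
        simp only [Finset.mem_filter, Finset.mem_range] at hj
        have hσn : σ n ≤ c * σ j := hreg n j (by omega) (by omega)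
        have hB := hBIub j
        have h0a := norm_nonneg (a (n - j))
        have h0b := norm_nonneg (b j)
        calc ‖a (n - j)‖ * ‖b j‖ * σ n
            ≤ ‖a (n - j)‖ * ‖b j‖ * (c * σ j) := by
              have := mul_nonneg h0a h0b
              exact mul_le_mul_of_nonneg_left hσn this
          _ = c * (‖b j‖ * σ j) * ‖a (n - j)‖ := by ring
          _ ≤ c * BI * ‖a (n - j)‖ :=
              mul_le_mul_of_nonneg_right (mul_le_mul_of_nonneg_left hB hc.le) h0a
      refine (Finset.sum_le_sum step).trans ?_
      rw [← Finset.mul_sum]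
      refine mul_le_mul_of_nonneg_left ?_ (by positivity)
      have h2 : ∑ j ∈ (Finset.range (n+1)).filter (fun j => ¬ 2 * j ≤ n),
          ‖a (n - j)‖ ≤ ∑ j ∈ Finset.range (n+1), ‖a (n - j)‖ :=
        Finset.sum_le_sum_of_subset_of_nonneg (Finset.filter_subset _ _)
          (fun i _ _ => norm_nonneg _)
      refine h2.trans ?_
      have h4 : ∑ j ∈ Finset.range (n+1), ‖a (n - j)‖
          = ∑ j ∈ Finset.range (n+1), ‖a j‖ := by
        rw [← Finset.sum_range_reflect (fun k => ‖a k‖) (n+1)]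
        refine Finset.sum_congr rfl fun j hj => ?_
        congr 1
      rw [h4]
      exact Summable.sum_le_tsum _ (fun i _ => norm_nonneg _) haS
    linarith
  have hbdd : BddAbove (Set.range fun m => ‖convSeq a b m‖ * σ m) := by
    refine ⟨K, ?_⟩
    rintro x ⟨m, rfl⟩
    exact hsup m
  refine ⟨⟨hconvS, hbdd⟩, ?_⟩
  have hciSup : (⨆ m, ‖convSeq a b m‖ * σ m) ≤ K := ciSup_le hsup
  have hnorm : seqNorm σ (convSeq a b) ≤ K + A1 * B1 := by
    rw [seqNorm]
    exact add_le_add hciSup hconvT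
  refine hnorm.trans ?_
  rw [seqNorm, seqNorm, ← hA1, ← hB1, ← hAI, ← hBI, hK]
  nlinarith [mul_nonneg hAInn hBInn, mul_nonneg hAInn hB1nn, mul_nonneg hBInn hA1nn,
    mul_nonneg hA1nn hB1nn]
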